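/- Let (Ω,Σ,μ) be a finite measure space, Z a real Banach space, and ν : Σ → Z* a countably additive μ-continuous vector measure. For each z ∈ Z let f_z ∈ L¹(μ) denote the Radon–Nikodým derivative with respect to μ of the scalar measure A ↦ ⟨ν(A), z⟩. If C ⊆ Z is norm-bounded, then the set {f_z : z ∈ C} is uniformly integrable in L¹(μ). -/

import Mathlib

open MeasureTheory Filter Set Topology
open scoped UniformConvergence

noncomputable section

/-- The topology `σ(Z,X)` on `Z` of pointwise convergence on a subspace `X ⊆ Z*`. -/
def sigmaTop {Z : Type*} [NormedAddCommGroup Z] [NormedSpace ℝ Z]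
    (X : Submodule ℝ (Z →L[ℝ] ℝ)) : TopologicalSpace Z :=
  TopologicalSpace.induced (fun z => fun x : X => (x : Z →L[ℝ] ℝ) z) Pi.topologicalSpace

/-- The weak* topology on the dual of `E`: pointwise convergence on `E`. -/
def wstarTop (E : Type*) [NormedAddCommGroup E] [NormedSpace ℝ E] :
    TopologicalSpace (E →L[ℝ] ℝ) :=
  TopologicalSpace.induced (fun f => (f : E → ℝ)) Pi.topologicalSpace

/-- A norm-closed subspace `X ⊆ Z*` is norming for `Z` if
`|||z||| = sup {⟨x,z⟩ : x ∈ B_X}` is an equivalent norm on `Z`; since this sup is always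
`≤ ‖z‖`, this amounts to the existence of `c > 0` with `c⬝‖z‖ ≤ |||z|||` for all `z`. -/
def IsNorming {Z : Type*} [NormedAddCommGroup Z] [NormedSpace ℝ Z]
    (X : Submodule ℝ (Z →L[ℝ] ℝ)) : Prop :=
  ∃ c > (0 : ℝ), ∀ z : Z, c * ‖z‖ ≤ sSup {r : ℝ | ∃ x ∈ X, ‖x‖ ≤ 1 ∧ r = x z}

/-- The average range `𝒜_ν(A) = {ν(B)/μ(B) : B ∈ Σ, B ⊆ A, μ(B) > 0}`. -/
def avgRange {Ω : Type*} [MeasurableSpace Ω] {Z : Type*} [NormedAddCommGroup Z]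
    [NormedSpace ℝ Z] (μ : Measure Ω) (ν : VectorMeasure Ω (Z →L[ℝ] ℝ)) (A : Set Ω) :
    Set (Z →L[ℝ] ℝ) :=
  {w | ∃ B : Set Ω, MeasurableSet B ∧ B ⊆ A ∧ 0 < μ B ∧ w = (μ B).toReal⁻¹ • ν B}

/-- Condition (G): for every `A ∈ Σ` with `μ(A) > 0`, the `w*`-closed convex hull of the
average range `𝒜_ν(A)` intersects `X`. -/
def CondG {Ω : Type*} [MeasurableSpace Ω] {Z : Type*} [NormedAddCommGroup Z]
    [NormedSpace ℝ Z] (μ : Measure Ω) (ν : VectorMeasure Ω (Z →L[ℝ] ℝ))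
    (X : Submodule ℝ (Z →L[ℝ] ℝ)) : Prop :=
  ∀ A : Set Ω, MeasurableSet A → 0 < μ A →
    (@closure _ (wstarTop Z) (convexHull ℝ (avgRange μ ν A)) ∩
      (X : Set (Z →L[ℝ] ℝ))).Nonempty

/-- `h` is a convex block subsequence of `g`: `h k = ∑_{n ∈ I k} a n • g n` where the finite
sets `I k` satisfy `max (I k) < min (I (k+1))` and the `a n` are non-negative reals summing
to `1` over each `I k`. -/
def ConvexBlock {E : Type*} [AddCommMonoid E] [Module ℝ E] (g h : ℕ → E) : Prop :=
  ∃ (I : ℕ → Finset ℕ) (a : ℕ → ℝ),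
    (∀ k, ∀ n ∈ I k, ∀ m ∈ I (k + 1), n < m) ∧
    (∀ n, 0 ≤ a n) ∧ (∀ k, ∑ n ∈ I k, a n = 1) ∧
    (∀ k, h k = ∑ n ∈ I k, a n • g n)

/-- `(B_{X*}, w*)` is convex block compact: every sequence in the closed unit ball of `X*`
admits a convex block subsequence which is `w*`-convergent. -/
def DualBallConvexBlockCompact (X : Type*) [NormedAddCommGroup X] [NormedSpace ℝ X] : Prop :=
  ∀ g : ℕ → (X →L[ℝ] ℝ), (∀ n, ‖g n‖ ≤ 1) →
    ∃ h : ℕ → (X →L[ℝ] ℝ), ConvexBlock g h ∧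
      ∃ f : X →L[ℝ] ℝ, Tendsto h atTop (@nhds _ (wstarTop X) f)

section Aux

variable {Ω : Type*} [MeasurableSpace Ω] {E : Type*} [NormedAddCommGroup E]

/-- Values of a vector measure on a pairwise disjoint sequence tend to `0`. -/
lemma aux_tendsto_zero_of_disjoint (ν : VectorMeasure Ω E) (Cs : ℕ → Set Ω)
    (hm : ∀ n, MeasurableSet (Cs n)) (hd : Pairwise (Function.onFun Disjoint Cs)) :
    Tendsto (fun n => ν (Cs n)) atTop (𝓝 0) :=
  (ν.m_iUnion hm hd).summable.tendsto_atTop_zero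

/-- Continuity from above of a vector measure along an antitone sequence. -/
lemma aux_tendsto_iInter (ν : VectorMeasure Ω E) (s : ℕ → Set Ω)
    (hm : ∀ n, MeasurableSet (s n)) (hanti : Antitone s) :
    Tendsto (fun n => ν (s n)) atTop (𝓝 (ν (⋂ n, s n))) := by
  classical
  set D : ℕ → Set Ω := fun k => s k \ s (k + 1) with hD
  have hDm : ∀ k, MeasurableSet (D k) := fun k => (hm k).diff (hm (k + 1))
  have hDd : Pairwise (Function.onFun Disjoint D) := by
    have key : ∀ i j, i < j → Disjoint (D i) (D j) := by
      intro i j hij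
      have h1 : D j ⊆ s (i + 1) :=
        (Set.diff_subset).trans (hanti (Nat.succ_le_of_lt hij))
      exact Set.disjoint_of_subset_right h1 Set.disjoint_sdiff_left
    intro i j hij
    rcases lt_or_gt_of_ne hij with h | h
    · exact key i j h
    · exact (key j i h).symm
  have hUnion : (⋃ k, D k) = s 0 \ ⋂ n, s n := by
    ext ω
    simp only [Set.mem_iUnion, Set.mem_diff, Set.mem_iInter, hD, not_forall]
    constructor
    · rintro ⟨k, hk1, hk2⟩
      exact ⟨hanti (Nat.zero_le k) hk1, ⟨k + 1, hk2⟩⟩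
    · rintro ⟨h0, hne⟩
      have hex : ∃ n, ω ∉ s n := hne
      set k := Nat.find hex with hk
      have hkne : ω ∉ s k := Nat.find_spec hex
      have hkpos : 0 < k := by
        rcases Nat.eq_zero_or_pos k with h | h
        · exact absurd (h ▸ hkne) (not_not_intro h0)
        · exact h
      refine ⟨k - 1, ?_, ?_⟩
      · by_contra hmem
        have hklt : k - 1 < Nat.find hex := by rw [← hk]; exact Nat.pred_lt hkpos.ne'
        exact Nat.find_min hex hklt hmem
      · rwa [Nat.sub_add_cancel hkpos]
  have hiIm : MeasurableSet (⋂ n, s n) := MeasurableSet.iInter hm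
  have hsub : (⋂ n, s n) ⊆ s 0 := Set.iInter_subset s 0
  have hSum : HasSum (fun k => ν (D k)) (ν (s 0 \ ⋂ n, s n)) := by
    have := ν.m_iUnion hDm hDd
    rwa [hUnion] at this
  have htel : ∀ k, ν (s k) = ν (s 0) - ∑ j ∈ Finset.range k, ν (D j) := by
    intro k
    induction k with
    | zero => simp
    | succ k ih =>
      have hstep : ν (s k) = ν (s (k + 1)) + ν (D k) := by
        have hu : s (k + 1) ∪ D k = s k := Set.union_diff_cancel (hanti (Nat.le_succ k))
        rw [← hu, ν.of_union Set.disjoint_sdiff_right (hm (k + 1)) (hDm k)]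
      have h' : ν (s (k + 1)) = ν (s k) - ν (D k) := by rw [hstep]; abel
      rw [Finset.sum_range_succ, h', ih]; abel
  have h0 : ν (s 0) = ν (⋂ n, s n) + ν (s 0 \ ⋂ n, s n) := by
    conv_lhs => rw [← Set.union_diff_cancel hsub]
    exact ν.of_union Set.disjoint_sdiff_right hiIm ((hm 0).diff hiIm)
  have hT : Tendsto (fun k => ν (s 0) - ∑ j ∈ Finset.range k, ν (D j)) atTop
      (𝓝 (ν (s 0) - ν (s 0 \ ⋂ n, s n))) :=
    (hSum.tendsto_sum_nat).const_sub _
  have heq : (fun k => ν (s 0) - ∑ j ∈ Finset.range k, ν (D j)) = fun k => ν (s k) := by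
    funext k; exact (htel k).symm
  rw [heq] at hT
  have : ν (s 0) - ν (s 0 \ ⋂ n, s n) = ν (⋂ n, s n) := by rw [h0]; abel
  rwa [this] at hT

/-- ε–δ absolute continuity for a countably additive `μ`-continuous vector measure. -/
lemma aux_eps_delta (μ : Measure Ω) (ν : VectorMeasure Ω E)
    (hν : ∀ A : Set Ω, μ A = 0 → ν A = 0) :
    ∀ ε > (0 : ℝ), ∃ δ > (0 : ℝ), ∀ A : Set Ω, MeasurableSet A →
      μ A ≤ ENNReal.ofReal δ → ‖ν A‖ ≤ ε := by
  by_contra hcon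
  push_neg at hcon
  obtain ⟨ε, hε, h⟩ := hcon
  choose A hAm hAμ hAν using fun n : ℕ =>
    h ((1 / 2 : ℝ) ^ n) (by positivity)
  -- the tail unions
  set F : ℕ → Set Ω := fun k => ⋃ n, A (n + k) with hF
  have hFm : ∀ k, MeasurableSet (F k) := fun k => MeasurableSet.iUnion fun n => hAm (n + k)
  have hFanti : Antitone F := by
    apply antitone_nat_of_succ_le
    intro k ω hω
    obtain ⟨n, hn⟩ := Set.mem_iUnion.1 hω
    refine Set.mem_iUnion.2 ⟨n + 1, ?_⟩
    have he : n + 1 + k = n + (k + 1) := by ring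
    rw [he]; exact hn
  have hsubF : ∀ m, A m ⊆ F m := fun m => by
    intro ω hω; exact Set.mem_iUnion.2 ⟨0, by simpa using hω⟩
  -- the intersection is null
  have hFμ : ∀ k, μ (F k) ≤ ENNReal.ofReal (2 * (1 / 2 : ℝ) ^ k) := by
    intro k
    calc μ (F k) ≤ ∑' n, μ (A (n + k)) := measure_iUnion_le _
      _ ≤ ∑' n : ℕ, ENNReal.ofReal ((1 / 2 : ℝ) ^ (n + k)) :=
          ENNReal.tsum_le_tsum fun n => hAμ (n + k)
      _ = ENNReal.ofReal (∑' n : ℕ, (1 / 2 : ℝ) ^ (n + k)) := by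
          rw [ENNReal.ofReal_tsum_of_nonneg (fun n => by positivity)]
          exact (summable_geometric_of_lt_one (by norm_num) (by norm_num)).comp_injective
            (add_left_injective k)
      _ = ENNReal.ofReal (2 * (1 / 2 : ℝ) ^ k) := by
          congr 1
          have : ∀ n : ℕ, (1 / 2 : ℝ) ^ (n + k) = (1 / 2 : ℝ) ^ k * (1 / 2 : ℝ) ^ n := by
            intro n; rw [pow_add]; ring
          simp_rw [this]
          rw [tsum_mul_left, tsum_geometric_of_lt_one (by norm_num) (by norm_num)]
          norm_num
          ring
  have hinull : μ (⋂ k, F k) = 0 := by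
    have hle : ∀ k, μ (⋂ k, F k) ≤ ENNReal.ofReal (2 * (1 / 2 : ℝ) ^ k) := fun k =>
      (measure_mono (Set.iInter_subset F k)).trans (hFμ k)
    have htend : Tendsto (fun k => ENNReal.ofReal (2 * (1 / 2 : ℝ) ^ k)) atTop (𝓝 0) := by
      rw [show (0 : ENNReal) = ENNReal.ofReal 0 by simp]
      apply ENNReal.tendsto_ofReal
      have := tendsto_pow_atTop_nhds_zero_of_lt_one (by norm_num : (0:ℝ) ≤ 1/2)
        (by norm_num : (1/2 : ℝ) < 1)
      simpa using this.const_mul (2 : ℝ)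
    exact le_antisymm (ge_of_tendsto' htend hle) zero_le
  -- choose a rapidly increasing subsequence
  have hchoice : ∀ m : ℕ, ∃ k, m < k ∧ ‖ν (A m ∩ F k)‖ < ε / 2 := by
    intro m
    have hT : Tendsto (fun k => ν (A m ∩ F k)) atTop (𝓝 (ν (⋂ k, A m ∩ F k))) :=
      aux_tendsto_iInter ν _ (fun k => (hAm m).inter (hFm k))
        (fun i j hij => Set.inter_subset_inter_right _ (hFanti hij))
    have hnull : ν (⋂ k, A m ∩ F k) = 0 := by
      apply hν
      have : (⋂ k, A m ∩ F k) ⊆ ⋂ k, F k :=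
        Set.iInter_mono fun k => Set.inter_subset_right
      exact measure_mono_null this hinull
    rw [hnull] at hT
    have h1 : ∀ᶠ k in atTop, ‖ν (A m ∩ F k)‖ < ε / 2 := by
      have h' := hT.norm
      simp only [norm_zero] at h'
      exact h'.eventually_lt_const (by linarith)
    have h2 : ∀ᶠ k in atTop, m < k := eventually_gt_atTop m
    exact (h2.and h1).exists
  choose φ hφlt hφnorm using hchoice
  set n : ℕ → ℕ := fun j => Nat.rec 0 (fun _ ih => φ ih) j with hn
  have hnsucc : ∀ j, n (j + 1) = φ (n j) := fun j => rfl
  have hnmono : StrictMono n := strictMono_nat_of_lt_succ fun j => by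
    rw [hnsucc]; exact hφlt (n j)
  -- the disjoint sequence
  set Cs : ℕ → Set Ω := fun j => A (n j) \ F (n (j + 1)) with hCs
  have hCm : ∀ j, MeasurableSet (Cs j) := fun j => (hAm _).diff (hFm _)
  have hCd : Pairwise (Function.onFun Disjoint Cs) := by
    have key : ∀ i j, i < j → Disjoint (Cs i) (Cs j) := by
      intro i j hij
      have h1 : Cs j ⊆ F (n (i + 1)) := by
        refine (Set.diff_subset).trans ((hsubF (n j)).trans (hFanti ?_))
        exact hnmono.monotone (Nat.succ_le_of_lt hij)
      exact Set.disjoint_of_subset_right h1 Set.disjoint_sdiff_left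
    intro i j hij
    rcases lt_or_gt_of_ne hij with h | h
    · exact key i j h
    · exact (key j i h).symm
  have hClb : ∀ j, ε / 2 ≤ ‖ν (Cs j)‖ := by
    intro j
    have hdecomp : ν (A (n j)) = ν (A (n j) ∩ F (n (j + 1))) + ν (Cs j) := by
      conv_lhs => rw [← Set.inter_union_diff (A (n j)) (F (n (j + 1)))]
      exact ν.of_union Set.disjoint_sdiff_inter.symm ((hAm _).inter (hFm _)) (hCm j)
    have h1 : ε < ‖ν (A (n j))‖ := hAν (n j)
    have h2 : ‖ν (A (n j) ∩ F (n (j + 1)))‖ < ε / 2 := by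
      rw [hnsucc]; exact hφnorm (n j)
    have : ‖ν (A (n j))‖ ≤ ‖ν (A (n j) ∩ F (n (j + 1)))‖ + ‖ν (Cs j)‖ := by
      rw [hdecomp]; exact norm_add_le _ _
    linarith
  have hT0 : Tendsto (fun j => ν (Cs j)) atTop (𝓝 0) :=
    aux_tendsto_zero_of_disjoint ν Cs hCm hCd
  have : ∀ᶠ j in atTop, ‖ν (Cs j)‖ < ε / 2 := by
    have h' := hT0.norm
    simp only [norm_zero] at h'
    exact h'.eventually_lt_const (by linarith)
  obtain ⟨j, hj⟩ := this.exists
  exact absurd (hClb j) (not_le.2 hj)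

end Aux

/-- If `ν ∈ ca(μ, Z*)` and `C ⊆ Z` is norm-bounded, then the family of Radon–Nikodým
derivatives `{f_z = d⟨ν,z⟩/dμ : z ∈ C}` is uniformly integrable in `L¹(μ)`. -/
theorem unifIntegrable_of_normBounded
    {Ω : Type*} [MeasurableSpace Ω] (μ : Measure Ω) [IsFiniteMeasure μ]
    {Z : Type*} [NormedAddCommGroup Z] [NormedSpace ℝ Z] [CompleteSpace Z]
    (ν : VectorMeasure Ω (Z →L[ℝ] ℝ))
    (hν : ∀ A : Set Ω, μ A = 0 → ν A = 0)
    (f : Z → Ω → ℝ)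
    (hfint : ∀ z : Z, Integrable (f z) μ)
    (hfRN : ∀ z : Z, ∀ A : Set Ω, MeasurableSet A → ∫ ω in A, f z ω ∂μ = ν A z)
    (C : Set Z) (hC : ∃ M : ℝ, ∀ z ∈ C, ‖z‖ ≤ M) :
    (∃ M : ℝ, ∀ z ∈ C, ∫ ω, |f z ω| ∂μ ≤ M) ∧
    ∀ ε > (0 : ℝ), ∃ δ > (0 : ℝ), ∀ A : Set Ω, MeasurableSet A →
      μ A ≤ ENNReal.ofReal δ → ∀ z ∈ C, ∫ ω in A, |f z ω| ∂μ ≤ ε := by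
  obtain ⟨M₀, hM₀⟩ := hC
  set M : ℝ := max M₀ 1 with hMdef
  have hMpos : (0 : ℝ) < M := lt_of_lt_of_le one_pos (le_max_right _ _)
  have hMz : ∀ z ∈ C, ‖z‖ ≤ M := fun z hz => (hM₀ z hz).trans (le_max_left _ _)
  -- key identity: the set integral of |f z| is a difference of two values of ν applied to z
  have key : ∀ z : Z, ∀ A : Set Ω, MeasurableSet A → ∃ P : Set Ω, MeasurableSet P ∧
      ∫ ω in A, |f z ω| ∂μ = ν (A ∩ P) z - ν (A ∩ Pᶜ) z := by
    intro z A hA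
    have hint := hfint z
    have hmz : AEMeasurable (f z) μ := hint.aemeasurable
    set g : Ω → ℝ := hmz.mk (f z) with hg
    have hgm : Measurable g := hmz.measurable_mk
    have hfg : f z =ᵐ[μ] g := hmz.ae_eq_mk
    set P : Set Ω := {ω | 0 ≤ g ω} with hP
    have hPm : MeasurableSet P := measurableSet_le measurable_const hgm
    refine ⟨P, hPm, ?_⟩
    have h1 : ∫ ω in A ∩ P, |f z ω| ∂μ = ∫ ω in A ∩ P, f z ω ∂μ := by
      apply setIntegral_congr_ae (hA.inter hPm)
      filter_upwards [hfg] with ω hω hmem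
      rw [hω, abs_of_nonneg hmem.2]
    have h2 : ∫ ω in A ∩ Pᶜ, |f z ω| ∂μ = -∫ ω in A ∩ Pᶜ, f z ω ∂μ := by
      rw [← integral_neg]
      apply setIntegral_congr_ae (hA.inter hPm.compl)
      filter_upwards [hfg] with ω hω hmem
      have : g ω < 0 := lt_of_not_ge hmem.2
      rw [hω, abs_of_neg this]
    have h3 : ∫ ω in A, |f z ω| ∂μ =
        ∫ ω in A ∩ P, |f z ω| ∂μ + ∫ ω in A ∩ Pᶜ, |f z ω| ∂μ := by
      rw [← setIntegral_union
        (Disjoint.mono Set.inter_subset_right Set.inter_subset_right disjoint_compl_right)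
        (hA.inter hPm.compl) hint.abs.integrableOn hint.abs.integrableOn,
        Set.inter_union_compl]
    rw [h3, h1, h2, hfRN z (A ∩ P) (hA.inter hPm), hfRN z (A ∩ Pᶜ) (hA.inter hPm.compl)]
    ring
  -- the general bound
  have bound : ∀ z : Z, ‖z‖ ≤ M → ∀ A : Set Ω, MeasurableSet A → ∀ r : ℝ,
      (∀ B ⊆ A, MeasurableSet B → ‖ν B‖ ≤ r) → ∫ ω in A, |f z ω| ∂μ ≤ 2 * r * M := by
    intro z hz A hA r hr
    obtain ⟨P, hPm, heq⟩ := key z A hA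
    have hb1 : |ν (A ∩ P) z| ≤ r * M := by
      calc |ν (A ∩ P) z| ≤ ‖ν (A ∩ P)‖ * ‖z‖ := (ν (A ∩ P)).le_opNorm z
        _ ≤ r * M := mul_le_mul (hr _ Set.inter_subset_left (hA.inter hPm)) hz
            (norm_nonneg _) ((norm_nonneg _).trans (hr _ Set.inter_subset_left (hA.inter hPm)))
    have hb2 : |ν (A ∩ Pᶜ) z| ≤ r * M := by
      calc |ν (A ∩ Pᶜ) z| ≤ ‖ν (A ∩ Pᶜ)‖ * ‖z‖ := (ν (A ∩ Pᶜ)).le_opNorm z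
        _ ≤ r * M := mul_le_mul (hr _ Set.inter_subset_left (hA.inter hPm.compl)) hz
            (norm_nonneg _)
            ((norm_nonneg _).trans (hr _ Set.inter_subset_left (hA.inter hPm.compl)))
    rw [heq]
    have := abs_sub (ν (A ∩ P) z) (ν (A ∩ Pᶜ) z)
    calc ν (A ∩ P) z - ν (A ∩ Pᶜ) z ≤ |ν (A ∩ P) z - ν (A ∩ Pᶜ) z| := le_abs_self _
      _ ≤ |ν (A ∩ P) z| + |ν (A ∩ Pᶜ) z| := abs_sub _ _
      _ ≤ r * M + r * M := add_le_add hb1 hb2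
      _ = 2 * r * M := by ring
  constructor
  · -- uniform norm bound via Banach–Steinhaus
    have hptwise : ∀ z : Z, ∃ c : ℝ, ∀ B : Set Ω, ‖ν B z‖ ≤ c := by
      intro z
      refine ⟨∫ ω, |f z ω| ∂μ, fun B => ?_⟩
      by_cases hB : MeasurableSet B
      · rw [← hfRN z B hB]
        calc ‖∫ ω in B, f z ω ∂μ‖ ≤ ∫ ω in B, ‖f z ω‖ ∂μ := norm_integral_le_integral_norm _
          _ = ∫ ω in B, |f z ω| ∂μ := by simp [Real.norm_eq_abs]
          _ ≤ ∫ ω, |f z ω| ∂μ := setIntegral_le_integral (hfint z).abs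
              (Filter.Eventually.of_forall fun ω => abs_nonneg _)
      · rw [ν.not_measurable hB]
        simp only [ContinuousLinearMap.zero_apply, norm_zero]
        exact integral_nonneg fun ω => abs_nonneg _
    obtain ⟨K, hK⟩ := banach_steinhaus (g := fun B : Set Ω => ν B) hptwise
    refine ⟨2 * K * M, fun z hz => ?_⟩
    have := bound z (hMz z hz) Set.univ MeasurableSet.univ K
      (fun B _ _ => hK B)
    rwa [Measure.restrict_univ] at this
  · -- uniform integrability
    intro ε hε
    obtain ⟨δ, hδpos, hδ⟩ := aux_eps_delta μ ν hν (ε / (2 * M)) (by positivity)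
    refine ⟨δ, hδpos, fun A hA hAμ z hz => ?_⟩
    have := bound z (hMz z hz) A hA (ε / (2 * M))
      (fun B hBA hBm => hδ B hBm ((measure_mono hBA).trans hAμ))
    calc ∫ ω in A, |f z ω| ∂μ ≤ 2 * (ε / (2 * M)) * M := this
      _ = ε := by field_simp
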